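/- Let 𝒰 be a complete metric space and f ∈ W(ℝ, 𝒰) equi-Weyl almost periodic (with respect to the truncated metric min{1,ρ}). Then for any ε > 0 and δ > 0 there exist l > 0 and finitely many points x₁, …, x_N ∈ 𝒰 such that sup_{ξ∈ℝ} meas{t ∈ [ξ, ξ+l] : ρ(f(t), {x₁,…,x_N}) ≥ δ} < ε·l. -/

import Mathlib

open MeasureTheory

/-- A set `T ⊆ ℝ` is relatively dense. -/
def RelDense (T : Set ℝ) : Prop :=
  ∃ a > (0 : ℝ), ∀ ξ : ℝ, ∃ τ ∈ T, ξ ≤ τ ∧ τ ≤ ξ + a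

/-- `f ∈ W(ℝ,𝒰)`: equi-Weyl almost periodic w.r.t. the truncated metric `min 1 ρ`. -/
def WAP {U : Type*} [MetricSpace U] (f : ℝ → U) : Prop :=
  AEStronglyMeasurable f volume ∧
    ∀ ε > (0 : ℝ), ∃ l > (0 : ℝ), RelDense {τ : ℝ |
      (⨆ ξ : ℝ, (1 / l) * ∫ t in ξ..(ξ + l), min 1 (dist (f t) (f (t + τ)))) < ε}

open Set Filter in
/-- On a finite-measure measurable set, an a.e. strongly measurable function is within `r` of a
finite set of values outside a set of measure `< η`. -/
lemma net_lemma {U : Type*} [MetricSpace U] (f : ℝ → U) (hf : AEStronglyMeasurable f volume)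
    (I : Set ℝ) (hI : MeasurableSet I) (hIfin : volume I ≠ ⊤) (r η : ℝ) (hr : 0 < r)
    (hη : 0 < η) :
    ∃ s : Finset U, s.Nonempty ∧
      volume {t ∈ I | ∀ x ∈ s, r ≤ dist (f t) x} < ENNReal.ofReal η := by
  classical
  set f' := hf.mk f with hf'def
  have hf' : StronglyMeasurable f' := hf.stronglyMeasurable_mk
  have hae : ∀ᵐ t ∂(volume : Measure ℝ), f t = f' t := hf.ae_eq_mk
  obtain ⟨c, hc_count, hc_range⟩ := hf'.isSeparable_range
  have hcne : c.Nonempty := by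
    rcases c.eq_empty_or_nonempty with h | h
    · exfalso
      have := hc_range (mem_range_self (0 : ℝ))
      simp [h] at this
    · exact h
  obtain ⟨u, hu⟩ := hc_count.exists_eq_range hcne
  have hcover : ∀ t : ℝ, ∃ n, dist (f' t) (u n) < r := by
    intro t
    have h1 : f' t ∈ closure c := hc_range (mem_range_self t)
    rw [hu] at h1
    rcases Metric.mem_closure_iff.1 h1 r hr with ⟨b, ⟨n, rfl⟩, hb⟩
    exact ⟨n, hb⟩
  set A : ℕ → Set ℝ := fun n => {t | dist (f' t) (u n) < r} with hA
  have hAmeas : ∀ n, MeasurableSet (A n) := fun n =>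
    (hf'.dist (stronglyMeasurable_const : StronglyMeasurable fun _ => u n)).measurable
      measurableSet_Iio
  set B : ℕ → Set ℝ := fun N => I \ ⋃ n < N, A n with hB
  have hBmeas : ∀ N, MeasurableSet (B N) :=
    fun N => hI.diff (MeasurableSet.biUnion (Set.to_countable _) fun n _ => hAmeas n)
  have hBanti : Antitone B := by
    intro m n hmn
    apply diff_subset_diff_right
    exact Set.biUnion_subset_biUnion_left fun k hk => lt_of_lt_of_le hk hmn
  have hBiInter : ⋂ N, B N = ∅ := by
    ext t
    simp only [Set.mem_iInter, Set.mem_empty_iff_false, iff_false]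
    intro h
    obtain ⟨n, hn⟩ := hcover t
    exact (h (n + 1)).2 (Set.mem_biUnion (Nat.lt_succ_self n) hn)
  have htend : Tendsto (fun N => volume (B N)) atTop (nhds 0) := by
    have h := tendsto_measure_iInter_atTop (μ := volume)
      (fun N => (hBmeas N).nullMeasurableSet) hBanti
      ⟨0, ne_top_of_le_ne_top hIfin (measure_mono diff_subset)⟩
    rwa [hBiInter, measure_empty] at h
  have hev : ∃ N, volume (B N) < ENNReal.ofReal η := by
    have hpos : (0 : ENNReal) < ENNReal.ofReal η := by positivity
    exact (htend.eventually (gt_mem_nhds hpos)).exists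
  obtain ⟨N, hN⟩ := hev
  refine ⟨(Finset.range (N + 1)).image u, ⟨u 0, Finset.mem_image_of_mem u (by simp)⟩, ?_⟩
  have hsub : {t ∈ I | ∀ x ∈ (Finset.range (N + 1)).image u, r ≤ dist (f t) x} ⊆
      B N ∪ {t | f t ≠ f' t} := by
    intro t ⟨htI, hts⟩
    by_cases heq : f t = f' t
    · left
      refine ⟨htI, ?_⟩
      intro hmem
      obtain ⟨_, ⟨n, rfl⟩, hn⟩ := hmem
      simp only [Set.mem_iUnion] at hn
      obtain ⟨hnN, hnA⟩ := hn
      have : r ≤ dist (f t) (u n) :=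
        hts (u n) (Finset.mem_image_of_mem u (Finset.mem_range.2 (hnN.trans (Nat.lt_succ_self N))))
      rw [heq] at this
      exact absurd hnA (not_lt.2 this)
    · right; exact heq
  calc volume {t ∈ I | ∀ x ∈ (Finset.range (N + 1)).image u, r ≤ dist (f t) x}
      ≤ volume (B N ∪ {t | f t ≠ f' t}) := measure_mono hsub
    _ ≤ volume (B N) + volume {t | f t ≠ f' t} := measure_union_le _ _
    _ = volume (B N) := by
        rw [show volume {t | f t ≠ f' t} = 0 from hae, add_zero]
    _ < ENNReal.ofReal η := hN

open Set Filter in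
theorem stmt9 {U : Type*} [MetricSpace U] [CompleteSpace U]
    (f : ℝ → U) (hf : WAP f) :
    ∀ ε > (0 : ℝ), ∀ δ > (0 : ℝ), ∃ l > (0 : ℝ), ∃ s : Finset U, s.Nonempty ∧
      (⨆ ξ : ℝ,
          (volume {t ∈ Set.Icc ξ (ξ + l) | ∀ x ∈ s, δ ≤ dist (f t) x}).toReal)
        < ε * l := by
  classical
  intro ε hε δ hδ
  obtain ⟨hmeas, hap⟩ := hf
  set δ' : ℝ := min 1 (δ / 2) with hδ'def
  have hδ'pos : 0 < δ' := lt_min one_pos (by linarith)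
  have hε₀ : 0 < ε * δ' / 4 := by positivity
  obtain ⟨l, hl, a, ha, hdense⟩ := hap (ε * δ' / 4) hε₀
  have hεl4 : 0 < ε * l / 4 := by positivity
  obtain ⟨s, hsne, hS⟩ := net_lemma f hmeas (Icc 0 (l + a)) measurableSet_Icc
    (by rw [Real.volume_Icc]; exact ENNReal.ofReal_ne_top) (δ / 2) (ε * l / 4)
    (by linarith) hεl4
  refine ⟨l, hl, s, hsne, ?_⟩
  have hfa : ∀ τ : ℝ, AEStronglyMeasurable (fun t => f (t + τ)) volume := fun τ =>
    hmeas.comp_quasiMeasurePreserving (measurePreserving_add_right volume τ).quasiMeasurePreserving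
  have key : ∀ ξ : ℝ,
      (volume {t ∈ Set.Icc ξ (ξ + l) | ∀ x ∈ s, δ ≤ dist (f t) x}).toReal ≤ ε * l / 2 := by
    intro ξ
    obtain ⟨τ, hτmem, hτ₁, hτ₂⟩ := hdense (-ξ)
    rw [Set.mem_setOf_eq] at hτmem
    set g : ℝ → ℝ := fun t => min 1 (dist (f t) (f (t + τ))) with hgdef
    have hg : AEStronglyMeasurable g volume :=
      aestronglyMeasurable_const.inf (hmeas.dist (hfa τ))
    have h0g : ∀ t, 0 ≤ g t := fun t => le_min zero_le_one dist_nonneg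
    have hg1 : ∀ t, g t ≤ 1 := fun t => min_le_left _ _
    have hIntOn : ∀ J : Set ℝ, volume J ≠ ⊤ → IntegrableOn g J volume := by
      intro J hJfin
      haveI : IsFiniteMeasure (volume.restrict J) :=
        ⟨by rwa [Measure.restrict_apply_univ, lt_top_iff_ne_top]⟩
      exact Integrable.mono' (integrable_const 1) hg.restrict
        (ae_of_all _ fun t => by
          rw [Real.norm_eq_abs, abs_of_nonneg (h0g t)]; exact hg1 t)
    have hiint : ∀ ξ' : ℝ, IntervalIntegrable g volume ξ' (ξ' + l) := by
      intro ξ'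
      rw [intervalIntegrable_iff]
      exact hIntOn _ (by rw [Set.uIoc, Real.volume_Ioc]; exact ENNReal.ofReal_ne_top)
    have hIle : ∀ ξ' : ℝ, (1 / l) * ∫ t in ξ'..(ξ' + l), g t ≤ 1 := by
      intro ξ'
      have h1 : ∫ t in ξ'..(ξ' + l), g t ≤ ∫ _t in ξ'..(ξ' + l), (1 : ℝ) :=
        intervalIntegral.integral_mono_on (by linarith) (hiint ξ')
          intervalIntegrable_const (fun t _ => hg1 t)
      rw [intervalIntegral.integral_const, smul_eq_mul, mul_one] at h1
      have h2 : (1 / l) * ∫ t in ξ'..(ξ' + l), g t ≤ (1 / l) * (ξ' + l - ξ') :=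
        mul_le_mul_of_nonneg_left h1 (by positivity)
      calc (1 / l) * ∫ t in ξ'..(ξ' + l), g t ≤ (1 / l) * (ξ' + l - ξ') := h2
        _ = 1 := by field_simp; ring
    have hbdd : BddAbove (Set.range fun ξ' : ℝ => (1 / l) * ∫ t in ξ'..(ξ' + l), g t) := by
      refine ⟨1, ?_⟩
      rintro x ⟨ξ', rfl⟩
      exact hIle ξ'
    have hsup : (1 / l) * ∫ t in ξ..(ξ + l), g t < ε * δ' / 4 :=
      lt_of_le_of_lt (le_ciSup hbdd ξ) hτmem
    have hintlt : ∫ t in ξ..(ξ + l), g t < ε * δ' / 4 * l := by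
      have h2 : ∫ t in ξ..(ξ + l), g t = l * ((1 / l) * ∫ t in ξ..(ξ + l), g t) := by
        field_simp
      rw [h2]
      calc l * ((1 / l) * ∫ t in ξ..(ξ + l), g t) < l * (ε * δ' / 4) :=
            mul_lt_mul_of_pos_left hsup hl
        _ = ε * δ' / 4 * l := by ring
    have hIccfin : volume (Icc ξ (ξ + l)) ≠ ⊤ := by
      rw [Real.volume_Icc]; exact ENNReal.ofReal_ne_top
    have hIc : IntegrableOn g (Icc ξ (ξ + l)) volume := hIntOn _ hIccfin
    have cheb := mul_meas_ge_le_integral_of_nonneg (μ := volume.restrict (Icc ξ (ξ + l)))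
      (ae_of_all _ h0g) hIc δ'
    rw [measureReal_def, Measure.restrict_apply' measurableSet_Icc] at cheb
    have hin : ∫ t, g t ∂(volume.restrict (Icc ξ (ξ + l))) = ∫ t in ξ..(ξ + l), g t := by
      rw [intervalIntegral.integral_of_le (by linarith : ξ ≤ ξ + l)]
      exact integral_Icc_eq_integral_Ioc
    rw [hin] at cheb
    set Bad₁ : Set ℝ := {t | δ' ≤ g t} ∩ Icc ξ (ξ + l) with hBad₁def
    have hfin1 : volume Bad₁ ≠ ⊤ :=
      ne_top_of_le_ne_top hIccfin (measure_mono inter_subset_right)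
    have hBad₁ : (volume Bad₁).toReal < ε * l / 4 := by
      have h3 : δ' * (volume Bad₁).toReal < δ' * (ε * l / 4) := by nlinarith
      exact lt_of_mul_lt_mul_left h3 hδ'pos.le
    have hBad₁' : volume Bad₁ < ENNReal.ofReal (ε * l / 4) :=
      (ENNReal.lt_ofReal_iff_toReal_lt hfin1).2 hBad₁
    set S' : Set ℝ := {r ∈ Icc 0 (l + a) | ∀ x ∈ s, δ / 2 ≤ dist (f r) x} with hS'def
    have hBad₂ : volume ((fun t => t + τ) ⁻¹' S') < ENNReal.ofReal (ε * l / 4) := by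
      rw [measure_preimage_add_right]; exact hS
    have hsub : {t ∈ Set.Icc ξ (ξ + l) | ∀ x ∈ s, δ ≤ dist (f t) x} ⊆
        Bad₁ ∪ (fun t => t + τ) ⁻¹' S' := by
      rintro t ⟨htIcc, hts⟩
      by_cases hd : δ / 2 ≤ dist (f t) (f (t + τ))
      · left
        refine ⟨?_, htIcc⟩
        exact le_trans (min_le_min le_rfl hd) le_rfl
      · right
        push_neg at hd
        have h6 : t + τ ∈ S' := by
          refine ⟨Set.mem_Icc.2 ⟨by linarith [htIcc.1], by linarith [htIcc.2]⟩, ?_⟩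
          intro x hx
          have h4 := hts x hx
          have h5 := dist_triangle (f t) (f (t + τ)) x
          linarith
        exact h6
    have htot : volume {t ∈ Set.Icc ξ (ξ + l) | ∀ x ∈ s, δ ≤ dist (f t) x}
        ≤ ENNReal.ofReal (ε * l / 2) := by
      calc volume {t ∈ Set.Icc ξ (ξ + l) | ∀ x ∈ s, δ ≤ dist (f t) x}
          ≤ volume (Bad₁ ∪ (fun t => t + τ) ⁻¹' S') := measure_mono hsub
        _ ≤ volume Bad₁ + volume ((fun t => t + τ) ⁻¹' S') := measure_union_le _ _
        _ ≤ ENNReal.ofReal (ε * l / 4) + ENNReal.ofReal (ε * l / 4) :=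
            add_le_add hBad₁'.le hBad₂.le
        _ = ENNReal.ofReal (ε * l / 2) := by
            rw [← ENNReal.ofReal_add (by positivity) (by positivity)]; ring_nf
    exact ENNReal.toReal_le_of_le_ofReal (by positivity) htot
  have hfinal : (⨆ ξ : ℝ,
      (volume {t ∈ Set.Icc ξ (ξ + l) | ∀ x ∈ s, δ ≤ dist (f t) x}).toReal) ≤ ε * l / 2 :=
    Real.iSup_le key (by positivity)
  have : 0 < ε * l := mul_pos hε hl
  linarith
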